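/- Suppose 1 ≤ K ≤ N and all N·M similarity values s_{i,j} are pairwise distinct. Then for every i ∈ {1,…,N} and j ∈ {1,…,M}, the size of the boundary set satisfies |BSet(i,j;K)| = Σ_S ( ∏_{n ∉ S, n ≠ i} α_{i,j}[n] ) · ( ∏_{n ∈ S} (M − α_{i,j}[n]) ), where the sum ranges over all subsets S ⊆ {1,…,N} \ {i} of size K − 1. -/

import Mathlib

open Finset

/-- The top-`K` set of a possible world `w`: the set of indices `i` such that at most `K`
indices `i'` have similarity `s i' (w i')` at least `s i (w i)`. Under the assumption that
all similarities are pairwise distinct, this is the set of the `K` indices with the largest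
similarities. -/
noncomputable def topK {N M : ℕ} (s : Fin N → Fin M → ℝ) (K : ℕ) (w : Fin N → Fin M) :
    Finset (Fin N) :=
  Finset.univ.filter fun i =>
    (Finset.univ.filter fun i' => s i (w i) ≤ s i' (w i')).card ≤ K

/-- The boundary set `BSet(i, j; K)`: possible worlds `w` with `w i = j`, `i ∈ Top(K, w)`,
and `s i j` minimal among the similarities of the members of `Top(K, w)`. -/
noncomputable def BSet {N M : ℕ} (s : Fin N → Fin M → ℝ) (K : ℕ) (i : Fin N) (j : Fin M) :
    Finset (Fin N → Fin M) :=
  Finset.univ.filter fun w =>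
    w i = j ∧ i ∈ topK s K w ∧ ∀ i' ∈ topK s K w, s i j ≤ s i' (w i')

/-- The similarity tally `α_{i,j}[n]`: the number of candidates `m` of the `n`-th candidate
set whose similarity is at most `s i j`. -/
noncomputable def alpha {N M : ℕ} (s : Fin N → Fin M → ℝ) (i : Fin N) (j : Fin M)
    (n : Fin N) : ℕ :=
  (Finset.univ.filter fun m => s n m ≤ s i j).card

/-- If `1 ≤ K ≤ N` and all similarities are pairwise distinct, then
`|BSet(i,j;K)| = Σ_S (∏_{n ∉ S, n ≠ i} α_{i,j}[n]) · (∏_{n ∈ S} (M − α_{i,j}[n]))`,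
summing over all subsets `S ⊆ {1,…,N} \ {i}` of size `K − 1`. -/

lemma rank_char {N K : ℕ} (hK1 : 1 ≤ K) (hKN : K ≤ N)
    (t : Fin N → ℝ) (ht : Function.Injective t) (i : Fin N) :
    ((Finset.univ.filter fun y => t i ≤ t y).card ≤ K ∧
      ∀ x, (Finset.univ.filter fun y => t x ≤ t y).card ≤ K → t i ≤ t x)
    ↔ (Finset.univ.filter fun y => t i ≤ t y).card = K := by
  classical
  set r : Fin N → ℕ := fun x => (Finset.univ.filter fun y => t x ≤ t y).card with hr
  have hlt : ∀ x y, t x < t y → r y < r x := by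
    intro x y hxy
    apply Finset.card_lt_card
    constructor
    · intro z hz
      simp only [mem_filter, mem_univ, true_and] at hz ⊢
      exact le_trans hxy.le hz
    · intro h
      have hx : x ∈ Finset.univ.filter fun y' => t x ≤ t y' := by
        simp
      have := h hx
      simp only [mem_filter, mem_univ, true_and] at this
      exact absurd this (not_le.2 hxy)
  constructor
  · rintro ⟨h1, h2⟩
    refine le_antisymm h1 ?_
    by_contra hlt2
    push_neg at hlt2
    -- elements strictly below t i
    have hcompl : (Finset.univ.filter fun y => t y < t i) =
        Finset.univ \ (Finset.univ.filter fun y => t i ≤ t y) := by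
      rw [← Finset.filter_not]
      simp [not_le]
    have hcard : (Finset.univ.filter fun y => t y < t i).card = N - r i := by
      rw [hcompl, Finset.card_sdiff_of_subset (Finset.filter_subset _ _)]
      simp [hr]
    have hri : r i = (Finset.univ.filter fun y => t i ≤ t y).card := rfl
    have hne : (Finset.univ.filter fun y => t y < t i).Nonempty := by
      rw [← Finset.card_pos, hcard]
      omega
    obtain ⟨b, hb, hbmax⟩ := Finset.exists_max_image _ t hne
    simp only [mem_filter, mem_univ, true_and] at hb
    have hins : (Finset.univ.filter fun y => t b ≤ t y) =
        insert b (Finset.univ.filter fun y => t i ≤ t y) := by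
      ext z
      simp only [mem_filter, mem_univ, true_and, mem_insert]
      constructor
      · intro hz
        by_cases hzi : t i ≤ t z
        · exact Or.inr hzi
        · left
          have hzb : z ∈ Finset.univ.filter fun y => t y < t i := by
            simp [not_le.1 hzi]
          exact ht (le_antisymm (hbmax z hzb) hz)
      · rintro (rfl | hz)
        · exact le_rfl
        · exact le_trans hb.le hz
    have hrb : r b = r i + 1 := by
      rw [hr]
      simp only [hins]
      rw [Finset.card_insert_of_notMem]
      simp only [mem_filter, mem_univ, true_and, not_le]
      exact hb
    have hrb' : r b = (Finset.univ.filter fun y => t b ≤ t y).card := rfl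
    have : t i ≤ t b := h2 b (by omega)
    exact absurd this (not_le.2 hb)
  · intro h
    refine ⟨le_of_eq h, fun x hx => ?_⟩
    by_contra hc
    push_neg at hc
    have := hlt x i hc
    have hri : r i = (Finset.univ.filter fun y => t i ≤ t y).card := rfl
    have hrx : r x = (Finset.univ.filter fun y => t x ≤ t y).card := rfl
    omega


lemma t_inj {N M : ℕ} (s : Fin N → Fin M → ℝ)
    (hs : Function.Injective fun p : Fin N × Fin M => s p.1 p.2)
    (w : Fin N → Fin M) : Function.Injective fun n => s n (w n) := by
  intro a b hab
  have h : ((a, w a) : Fin N × Fin M) = (b, w b) :=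
    hs (a₁ := (a, w a)) (a₂ := (b, w b)) hab
  exact congrArg Prod.fst h

lemma hins_lemma {N M : ℕ} (s : Fin N → Fin M → ℝ)
    (hs : Function.Injective fun p : Fin N × Fin M => s p.1 p.2)
    (i : Fin N) (j : Fin M) (w : Fin N → Fin M) (hwi : w i = j) :
    (Finset.univ.filter fun n => s i (w i) ≤ s n (w n)) =
      insert i ((Finset.univ.erase i).filter fun n => s i j < s n (w n)) := by
  ext z
  simp only [mem_filter, mem_univ, true_and, mem_insert, mem_erase, and_true, hwi]
  constructor
  · intro hz
    by_cases hzi : z = i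
    · exact Or.inl hzi
    · refine Or.inr ⟨hzi, ?_⟩
      have hne : s i j ≠ s z (w z) := fun h =>
        hzi (congrArg Prod.fst (hs (a₁ := (i, j)) (a₂ := (z, w z)) h)).symm
      exact lt_of_le_of_ne hz hne
  · rintro (rfl | ⟨hzi, hz⟩)
    · rw [hwi]
    · exact hz.le

theorem stmt1 (N M K : ℕ) (hK1 : 1 ≤ K) (hKN : K ≤ N)
    (s : Fin N → Fin M → ℝ)
    (hs : Function.Injective fun p : Fin N × Fin M => s p.1 p.2)
    (i : Fin N) (j : Fin M) :
    (BSet s K i j).card =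
      ∑ S ∈ (Finset.univ.erase i).powersetCard (K - 1),
        (∏ n ∈ (Finset.univ.erase i) \ S, alpha s i j n) *
          ∏ n ∈ S, (M - alpha s i j n) := by
  classical
  -- Step 1: characterization of BSet
  have hchar : ∀ w : Fin N → Fin M, w ∈ BSet s K i j ↔
      (w i = j ∧ ((Finset.univ.erase i).filter fun n => s i j < s n (w n)).card = K - 1) := by
    intro w
    simp only [BSet, topK, Finset.mem_filter, Finset.mem_univ, true_and]
    constructor
    · rintro ⟨hwi, h1, h2⟩
      refine ⟨hwi, ?_⟩
      have ht := t_inj s hs w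
      have hrc := (rank_char (t := fun n => s n (w n)) hK1 hKN ht i).mp
        ⟨h1, fun x hx => by rw [hwi]; exact h2 x hx⟩
      rw [hins_lemma s hs i j w hwi, Finset.card_insert_of_notMem (by simp)] at hrc
      omega
    · rintro ⟨hwi, hcard⟩
      have ht := t_inj s hs w
      have hK' : (Finset.univ.filter fun n => s i (w i) ≤ s n (w n)).card = K := by
        rw [hins_lemma s hs i j w hwi, Finset.card_insert_of_notMem (by simp), hcard]
        omega
      have hrc := (rank_char (t := fun n => s n (w n)) hK1 hKN ht i).mpr hK'
      refine ⟨hwi, hrc.1, fun x hx => ?_⟩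
      have := hrc.2 x hx
      rwa [hwi] at this
  -- Step 2: partition into product sets
  set A : Finset (Fin N) → Finset (Fin N → Fin M) := fun S =>
    Fintype.piFinset (fun n => if n = i then ({j} : Finset (Fin M))
      else if n ∈ S then Finset.univ.filter (fun m => s i j < s n m)
      else Finset.univ.filter (fun m => s n m ≤ s i j)) with hA
  have memA : ∀ S ⊆ Finset.univ.erase i, ∀ w : Fin N → Fin M,
      w ∈ A S ↔ (w i = j ∧ ((Finset.univ.erase i).filter fun n => s i j < s n (w n)) = S) := by
    intro S hS w
    rw [hA]
    simp only [Fintype.mem_piFinset]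
    constructor
    · intro h
      have hwi : w i = j := by
        have := h i
        rwa [if_pos rfl, Finset.mem_singleton] at this
      refine ⟨hwi, ?_⟩
      ext n
      simp only [mem_filter, mem_erase, mem_univ, and_true, true_and]
      constructor
      · rintro ⟨hni, hlt⟩
        by_contra hns
        have := h n
        rw [if_neg hni, if_neg hns, Finset.mem_filter] at this
        exact absurd hlt (not_lt.2 this.2)
      · intro hnS
        have hni : n ≠ i := (Finset.mem_erase.1 (hS hnS)).1
        have := h n
        rw [if_neg hni, if_pos hnS, Finset.mem_filter] at this
        exact ⟨hni, this.2⟩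
    · rintro ⟨hwi, hfil⟩ n
      by_cases hni : n = i
      · subst hni; rw [if_pos rfl, Finset.mem_singleton]; exact hwi
      · rw [if_neg hni]
        by_cases hnS : n ∈ S
        · rw [if_pos hnS]
          have : n ∈ (Finset.univ.erase i).filter fun n => s i j < s n (w n) := by
            rw [hfil]; exact hnS
          simp only [mem_filter] at this
          simp [this.2]
        · rw [if_neg hnS]
          have : n ∉ (Finset.univ.erase i).filter fun n => s i j < s n (w n) := by
            rw [hfil]; exact hnS
          simp only [mem_filter, mem_erase, mem_univ, and_true, true_and, not_and] at this
          simp [not_lt.1 (this hni)]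
  have hBU : BSet s K i j =
      ((Finset.univ.erase i).powersetCard (K - 1)).biUnion A := by
    ext w
    rw [Finset.mem_biUnion, hchar w]
    constructor
    · rintro ⟨hwi, hcard⟩
      refine ⟨(Finset.univ.erase i).filter fun n => s i j < s n (w n), ?_, ?_⟩
      · rw [Finset.mem_powersetCard]; exact ⟨Finset.filter_subset _ _, hcard⟩
      · exact (memA _ (Finset.filter_subset _ _) w).mpr ⟨hwi, rfl⟩
    · rintro ⟨S, hS, hw⟩
      rw [Finset.mem_powersetCard] at hS
      have := (memA S hS.1 w).mp hw
      exact ⟨this.1, by rw [this.2]; exact hS.2⟩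
  rw [hBU, Finset.card_biUnion]
  · apply Finset.sum_congr rfl
    intro S hS
    rw [Finset.mem_powersetCard] at hS
    rw [hA]
    rw [Fintype.card_piFinset]
    rw [← Finset.mul_prod_erase Finset.univ _ (Finset.mem_univ i)]
    rw [if_pos rfl, Finset.card_singleton, one_mul]
    rw [← Finset.prod_sdiff hS.1]
    congr 1
    · apply Finset.prod_congr rfl
      intro n hn
      rw [Finset.mem_sdiff, Finset.mem_erase] at hn
      rw [if_neg hn.1.1, if_neg hn.2]
      rfl
    · apply Finset.prod_congr rfl
      intro n hn
      have hni : n ≠ i := (Finset.mem_erase.1 (hS.1 hn)).1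
      rw [if_neg hni, if_pos hn]
      have : (Finset.univ.filter fun m => s i j < s n m) =
          Finset.univ \ (Finset.univ.filter fun m => s n m ≤ s i j) := by
        rw [← Finset.filter_not]
        simp [not_le]
      rw [this, Finset.card_sdiff_of_subset (Finset.filter_subset _ _)]
      simp [alpha]
  · intro S hS S' hS' hne
    simp only [Finset.disjoint_left]
    intro w hwS hwS'
    rw [Finset.mem_coe, Finset.mem_powersetCard] at hS hS'
    have h1 := (memA S hS.1 w).mp hwS
    have h2 := (memA S' hS'.1 w).mp hwS'
    exact hne (h1.2 ▸ h2.2)
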